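/- Gärtner–Ellis upper bound with general speed: let {R(t)} be real random variables, s_t → ∞ positive, Λ_t(q) = log E[exp(qR(t))], and suppose Λ(q) = lim_{t→∞} Λ_t(s_t q)/s_t exists in [−∞,∞] for each q with 0 in the interior of {q : Λ(q) < ∞}. Then for every closed set C ⊆ ℝ, limsup_{t→∞} (1/s_t) log P(R(t) ∈ C) ≤ −inf_{x∈C} Λ*(x), where Λ*(x) = sup_q (qx − Λ(q)). -/

import Mathlib

open MeasureTheory Filter Topology
open scoped ENNReal

/-- The cumulant `Λ_t(q) = log E[exp(q R(t))]`, as an extended real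
(`+∞` when the moment generating function is infinite, `-∞` when it vanishes). -/
noncomputable def cumulantFn {Ω : Type*} [MeasurableSpace Ω] (μ : Measure Ω)
    (R : ℝ → Ω → ℝ) (t q : ℝ) : EReal :=
  ENNReal.log (∫⁻ ω, ENNReal.ofReal (Real.exp (q * R t ω)) ∂μ)

section Aux

variable {Ω : Type*} [MeasurableSpace Ω] (μ : Measure Ω) [IsProbabilityMeasure μ]
  (R : ℝ → Ω → ℝ)

/-- Exponential Chebyshev inequality. -/
lemma ge_chebyshev_aux (hmeas : ∀ t, Measurable (R t)) (t r y : ℝ) :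
    ENNReal.ofReal (Real.exp (r * y)) * μ {ω | r * y ≤ r * R t ω}
      ≤ ∫⁻ ω, ENNReal.ofReal (Real.exp (r * R t ω)) ∂μ := by
  have hA : MeasurableSet {ω | r * y ≤ r * R t ω} :=
    measurableSet_le measurable_const ((hmeas t).const_mul r)
  calc ENNReal.ofReal (Real.exp (r * y)) * μ {ω | r * y ≤ r * R t ω}
      = ∫⁻ _ω in {ω | r * y ≤ r * R t ω}, ENNReal.ofReal (Real.exp (r * y)) ∂μ := by
        rw [setLIntegral_const]
    _ ≤ ∫⁻ ω in {ω | r * y ≤ r * R t ω}, ENNReal.ofReal (Real.exp (r * R t ω)) ∂μ := by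
        refine setLIntegral_mono' hA fun ω hω => ?_
        exact ENNReal.ofReal_le_ofReal (Real.exp_le_exp.2 hω)
    _ ≤ ∫⁻ ω, ENNReal.ofReal (Real.exp (r * R t ω)) ∂μ := setLIntegral_le_lintegral _ _

/-- Logarithmic form of the Chebyshev inequality. -/
lemma chebyshev_log (hmeas : ∀ t, Measurable (R t)) (t r y : ℝ) :
    ((r * y : ℝ) : EReal) + ENNReal.log (μ {ω | r * y ≤ r * R t ω})
      ≤ cumulantFn μ R t r := by
  have h := ENNReal.log_monotone (ge_chebyshev_aux μ R hmeas t r y)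
  rwa [ENNReal.log_mul_add, ENNReal.log_ofReal_of_pos (Real.exp_pos _), Real.log_exp] at h

lemma ediv_lt_aux {X : EReal} {c st : ℝ} (h : 0 < st) (hlt : X / (st : EReal) < (c : EReal)) :
    X < ((c * st : ℝ) : EReal) := by
  by_contra hcon
  push_neg at hcon
  have hc : (c : EReal) ≤ X / (st : EReal) := by
    refine (EReal.le_div_iff_mul_le ?_ (EReal.coe_ne_top st)).2 ?_
    · exact_mod_cast h
    · rw [← EReal.coe_mul]; exact hcon
  exact absurd hlt (not_lt.2 hc)

/-- Core eventual bound from the Chebyshev inequality and the limit assumption. -/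
lemma mu_event_le (hmeas : ∀ t, Measurable (R t))
    (s : ℝ → ℝ) (hspos : ∀ t, 0 < s t) (Λ : ℝ → EReal)
    (hΛ : ∀ q : ℝ, Tendsto (fun t : ℝ => cumulantFn μ R t (s t * q) / (s t : EReal))
      atTop (𝓝 (Λ q)))
    (a q x' : ℝ) (hlt : Λ q < ((q * x' - a : ℝ) : EReal)) :
    ∀ᶠ t in atTop, μ {ω | (s t * q) * x' ≤ (s t * q) * R t ω}
      ≤ ENNReal.ofReal (Real.exp (-a * s t)) := by
  filter_upwards [(hΛ q).eventually_lt_const hlt] with t ht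
  have hst := hspos t
  have h1 : cumulantFn μ R t (s t * q) < (((q * x' - a) * s t : ℝ) : EReal) :=
    ediv_lt_aux hst ht
  have h2 := chebyshev_log μ R hmeas t (s t * q) x'
  set m := μ {ω | (s t * q) * x' ≤ (s t * q) * R t ω} with hm
  have h3 : ((s t * q * x' : ℝ) : EReal) + ENNReal.log m
      < (((q * x' - a) * s t : ℝ) : EReal) := lt_of_le_of_lt h2 h1
  have h4 : ENNReal.log m ≤ ((-a * s t : ℝ) : EReal) := by
    have h5 : ENNReal.log m = (((s t * q * x' : ℝ) : EReal) + ENNReal.log m)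
        - ((s t * q * x' : ℝ) : EReal) := by
      rw [add_comm, EReal.add_sub_cancel_right]
    rw [h5]
    have h6 : (((q * x' - a) * s t : ℝ) : EReal) - ((s t * q * x' : ℝ) : EReal)
        = ((-a * s t : ℝ) : EReal) := by
      rw [← EReal.coe_sub]; norm_cast; ring
    rw [← h6]
    exact EReal.sub_le_sub h3.le le_rfl
  calc m = EReal.exp (ENNReal.log m) := (ENNReal.exp_log m).symm
    _ ≤ EReal.exp ((-a * s t : ℝ) : EReal) := EReal.exp_monotone h4
    _ = ENNReal.ofReal (Real.exp (-a * s t)) := EReal.exp_coe _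

lemma good_Ici (hmeas : ∀ t, Measurable (R t))
    (s : ℝ → ℝ) (hspos : ∀ t, 0 < s t) (Λ : ℝ → EReal)
    (hΛ : ∀ q : ℝ, Tendsto (fun t : ℝ => cumulantFn μ R t (s t * q) / (s t : EReal))
      atTop (𝓝 (Λ q)))
    (a q x' : ℝ) (hq : 0 < q) (hlt : Λ q < ((q * x' - a : ℝ) : EReal)) :
    ∀ᶠ t in atTop, μ {ω | R t ω ∈ Set.Ici x'} ≤ ENNReal.ofReal (Real.exp (-a * s t)) := by
  filter_upwards [mu_event_le μ R hmeas s hspos Λ hΛ a q x' hlt] with t ht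
  have hset : {ω | R t ω ∈ Set.Ici x'} = {ω | (s t * q) * x' ≤ (s t * q) * R t ω} := by
    ext ω
    simp only [Set.mem_setOf_eq, Set.mem_Ici]
    exact (mul_le_mul_iff_of_pos_left (mul_pos (hspos t) hq)).symm
  rw [hset]; exact ht

lemma good_Iic (hmeas : ∀ t, Measurable (R t))
    (s : ℝ → ℝ) (hspos : ∀ t, 0 < s t) (Λ : ℝ → EReal)
    (hΛ : ∀ q : ℝ, Tendsto (fun t : ℝ => cumulantFn μ R t (s t * q) / (s t : EReal))
      atTop (𝓝 (Λ q)))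
    (a q x' : ℝ) (hq : q < 0) (hlt : Λ q < ((q * x' - a : ℝ) : EReal)) :
    ∀ᶠ t in atTop, μ {ω | R t ω ∈ Set.Iic x'} ≤ ENNReal.ofReal (Real.exp (-a * s t)) := by
  filter_upwards [mu_event_le μ R hmeas s hspos Λ hΛ a q x' hlt] with t ht
  have hset : {ω | R t ω ∈ Set.Iic x'} = {ω | (s t * q) * x' ≤ (s t * q) * R t ω} := by
    ext ω
    simp only [Set.mem_setOf_eq, Set.mem_Iic]
    have hsq : s t * q < 0 := mul_neg_of_pos_of_neg (hspos t) hq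
    exact (mul_le_mul_left_of_neg hsq).symm
  rw [hset]; exact ht

end Aux

/-- Gärtner–Ellis upper bound with general speed: if
`Λ(q) = lim Λ_t(s_t q)/s_t` exists for each `q` and `0` is interior to
`{q : Λ(q) < ∞}`, then for every closed `C`,
`limsup (1/s_t) log P(R(t) ∈ C) ≤ −inf_{x∈C} Λ*(x)`. -/
theorem gartner_ellis_upper_bound {Ω : Type*} [MeasurableSpace Ω]
    (μ : Measure Ω) [IsProbabilityMeasure μ] (R : ℝ → Ω → ℝ)
    (hmeas : ∀ t, Measurable (R t))
    (s : ℝ → ℝ) (hs : Tendsto s atTop atTop) (hspos : ∀ t, 0 < s t)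
    (Λ : ℝ → EReal)
    (hΛ : ∀ q : ℝ, Tendsto (fun t : ℝ => cumulantFn μ R t (s t * q) / (s t : EReal))
      atTop (𝓝 (Λ q)))
    (h0 : (0:ℝ) ∈ interior {q : ℝ | Λ q < ⊤}) :
    ∀ C : Set ℝ, IsClosed C →
      Filter.limsup (fun t : ℝ => ENNReal.log (μ {ω | R t ω ∈ C}) / (s t : EReal)) atTop
        ≤ -(⨅ x ∈ C, ⨆ q : ℝ, ((q * x : ℝ) : EReal) - Λ q) := by
  intro C hC
  set J := ⨅ x ∈ C, ⨆ q : ℝ, ((q * x : ℝ) : EReal) - Λ q with hJdef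
  set f := fun t : ℝ => ENNReal.log (μ {ω | R t ω ∈ C}) / (s t : EReal) with hfdef
  -- Λ 0 = 0
  have hΛ0 : Λ 0 = 0 := by
    have h1 : ∀ t : ℝ, cumulantFn μ R t (s t * 0) / (s t : EReal) = 0 := by
      intro t
      have : cumulantFn μ R t (s t * 0) = 0 := by
        simp [cumulantFn, mul_zero, zero_mul, Real.exp_zero, lintegral_one, measure_univ]
      rw [this, EReal.zero_div]
    have h2 : Tendsto (fun t : ℝ => cumulantFn μ R t (s t * 0) / (s t : EReal))
        atTop (𝓝 0) := by
      simp only [h1]; exact tendsto_const_nhds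
    exact tendsto_nhds_unique (hΛ 0) h2
  -- trivial bound : limsup f ≤ 0
  have htriv : Filter.limsup f atTop ≤ 0 := by
    apply limsup_le_of_le
    · exact isCobounded_le_of_bot
    · filter_upwards with t
      have h1 : ENNReal.log (μ {ω | R t ω ∈ C}) ≤ 0 :=
        ENNReal.log_le_zero_iff.2 prob_le_one
      calc f t ≤ 0 / (s t : EReal) := by
            refine EReal.div_le_div_right_of_nonneg ?_ h1
            exact_mod_cast (hspos t).le
        _ = 0 := EReal.zero_div
  -- key bound
  have key : ∀ L : ℝ, 0 < L → (L : EReal) < J → Filter.limsup f atTop ≤ ((-L : ℝ) : EReal) := by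
    intro L hL0 hLJ
    obtain ⟨b, hLb, hbJ⟩ := EReal.exists_between_coe_real hLJ
    have hLbR : L < b := by exact_mod_cast hLb
    obtain ⟨a, hLa, hab⟩ := exists_between hLbR
    -- exponential tightness
    obtain ⟨ε, hε, hball⟩ := Metric.mem_nhds_iff.1 (mem_interior_iff_mem_nhds.1 h0)
    set q0 := ε / 2 with hq0def
    have hq0 : 0 < q0 := by positivity
    have hmem : ∀ y : ℝ, |y| = q0 → Λ y < ⊤ := by
      intro y hy
      have : y ∈ Metric.ball (0 : ℝ) ε := by
        simp only [Metric.mem_ball, Real.dist_eq, sub_zero]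
        rw [hy]; linarith
      exact hball this
    have hεp : Λ q0 < ⊤ := hmem q0 (abs_of_pos hq0)
    have hεm : Λ (-q0) < ⊤ := hmem (-q0) (by rw [abs_neg, abs_of_pos hq0])
    obtain ⟨r1, hr1, _⟩ := EReal.exists_between_coe_real hεp
    obtain ⟨r2, hr2, _⟩ := EReal.exists_between_coe_real hεm
    set M : ℝ := (max r1 r2 + a + 1) / q0 with hMdef
    have hMq : q0 * M = max r1 r2 + a + 1 := by
      rw [hMdef]; field_simp
    have hgoodR : ∀ᶠ t in atTop,
        μ {ω | R t ω ∈ Set.Ici M} ≤ ENNReal.ofReal (Real.exp (-a * s t)) := by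
      refine good_Ici μ R hmeas s hspos Λ hΛ a q0 M hq0 ?_
      refine lt_of_lt_of_le hr1 ?_
      have : r1 ≤ q0 * M - a := by
        have := le_max_left r1 r2; linarith [hMq]
      exact_mod_cast this
    have hgoodL : ∀ᶠ t in atTop,
        μ {ω | R t ω ∈ Set.Iic (-M)} ≤ ENNReal.ofReal (Real.exp (-a * s t)) := by
      refine good_Iic μ R hmeas s hspos Λ hΛ a (-q0) (-M) (neg_neg_iff_pos.2 hq0) ?_
      refine lt_of_lt_of_le hr2 ?_
      have : r2 ≤ (-q0) * (-M) - a := by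
        have := le_max_right r1 r2; nlinarith [hMq]
      exact_mod_cast this
    -- compact covering
    set K := C ∩ Set.Icc (-M) M with hKdef
    have hcov : ∀ x ∈ K, ∃ U A : Set ℝ, IsOpen U ∧ x ∈ U ∧ U ⊆ A ∧
        ∀ᶠ t in atTop, μ {ω | R t ω ∈ A} ≤ ENNReal.ofReal (Real.exp (-a * s t)) := by
      intro x hx
      have hxC : x ∈ C := hx.1
      have hbx : (b : EReal) < ⨆ q : ℝ, ((q * x : ℝ) : EReal) - Λ q := by
        refine lt_of_lt_of_le hbJ ?_
        exact iInf₂_le x hxC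
      obtain ⟨q, hq⟩ := lt_iSup_iff.1 hbx
      have hqne : q ≠ 0 := by
        rintro rfl
        rw [hΛ0] at hq
        simp only [zero_mul, EReal.coe_zero, sub_zero] at hq
        have : b < 0 := by exact_mod_cast hq
        linarith
      have hΛq : Λ q < ((q * x - b : ℝ) : EReal) := by
        set l := Λ q with hl
        clear_value l
        induction l using EReal.rec with
        | bot => exact EReal.bot_lt_coe _
        | coe r =>
            rw [← EReal.coe_sub] at hq
            have hbr : b < q * x - r := by exact_mod_cast hq
            exact_mod_cast (show r < q * x - b by linarith)
        | top =>
            rw [EReal.sub_top] at hq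
            exact absurd hq not_lt_bot
      rcases lt_or_gt_of_ne hqne with hneg | hpos
      · -- q < 0
        have hd : 0 < (b - a) / (-q) := div_pos (by linarith) (by linarith)
        refine ⟨Set.Iio (x + (b - a) / (-q)), Set.Iic (x + (b - a) / (-q)), isOpen_Iio,
          Set.mem_Iio.2 (lt_add_of_pos_right x hd), Set.Iio_subset_Iic_self, ?_⟩
        refine good_Iic μ R hmeas s hspos Λ hΛ a q _ hneg ?_
        have heq : q * (x + (b - a) / (-q)) - a = q * x - b := by
          rw [div_neg, mul_add, mul_neg, mul_div_cancel₀ _ hqne]; ring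
        rw [heq]; exact hΛq
      · -- q > 0
        have hd : 0 < (b - a) / q := div_pos (by linarith) hpos
        refine ⟨Set.Ioi (x - (b - a) / q), Set.Ici (x - (b - a) / q), isOpen_Ioi,
          Set.mem_Ioi.2 (by linarith), Set.Ioi_subset_Ici_self, ?_⟩
        refine good_Ici μ R hmeas s hspos Λ hΛ a q _ hpos ?_
        have heq : q * (x - (b - a) / q) - a = q * x - b := by
          field_simp
          ring
        rw [heq]; exact hΛq
    choose! U A hUopen hxU hUA hgood using hcov
    have hK : IsCompact K := isCompact_Icc.inter_left hC
    obtain ⟨τ, hτK, hτcov⟩ := hK.elim_nhds_subcover U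
      (fun x hx => (hUopen x hx).mem_nhds (hxU x hx))
    set n : ℕ := τ.card + 2 with hndef
    have hn2 : (2 : ℝ) ≤ n := by
      have : (2 : ℕ) ≤ n := by omega
      exact_mod_cast this
    -- eventual measure bound
    have hev : ∀ᶠ t in atTop, μ {ω | R t ω ∈ C}
        ≤ (n : ℝ≥0∞) * ENNReal.ofReal (Real.exp (-a * s t)) := by
      have hall : ∀ᶠ t in atTop, ∀ x ∈ τ,
          μ {ω | R t ω ∈ A x} ≤ ENNReal.ofReal (Real.exp (-a * s t)) :=
        (eventually_all_finset τ).2 (fun x hx => hgood x (hτK x hx))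
      filter_upwards [hall, hgoodR, hgoodL] with t h1 h2 h3
      have hsub : {ω | R t ω ∈ C} ⊆
          ({ω | R t ω ∈ Set.Ici M} ∪ {ω | R t ω ∈ Set.Iic (-M)})
            ∪ ⋃ x ∈ τ, {ω | R t ω ∈ A x} := by
        intro ω hω
        rcases le_or_gt (R t ω) M with hM1 | hM1
        · rcases le_or_gt (-M) (R t ω) with hM2 | hM2
          · have hKmem : R t ω ∈ K := ⟨hω, hM2, hM1⟩
            obtain ⟨x, hxτ, hxUx⟩ := Set.mem_iUnion₂.1 (hτcov hKmem)
            exact Or.inr (Set.mem_iUnion₂.2 ⟨x, hxτ, hUA x (hτK x hxτ) hxUx⟩)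
          · exact Or.inl (Or.inr hM2.le)
        · exact Or.inl (Or.inl hM1.le)
      calc μ {ω | R t ω ∈ C}
          ≤ μ (({ω | R t ω ∈ Set.Ici M} ∪ {ω | R t ω ∈ Set.Iic (-M)})
            ∪ ⋃ x ∈ τ, {ω | R t ω ∈ A x}) := measure_mono hsub
        _ ≤ μ ({ω | R t ω ∈ Set.Ici M} ∪ {ω | R t ω ∈ Set.Iic (-M)})
            + μ (⋃ x ∈ τ, {ω | R t ω ∈ A x}) := measure_union_le _ _
        _ ≤ (μ {ω | R t ω ∈ Set.Ici M} + μ {ω | R t ω ∈ Set.Iic (-M)})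
            + μ (⋃ x ∈ τ, {ω | R t ω ∈ A x}) := by
              gcongr; exact measure_union_le _ _
        _ ≤ (μ {ω | R t ω ∈ Set.Ici M} + μ {ω | R t ω ∈ Set.Iic (-M)})
            + ∑ x ∈ τ, μ {ω | R t ω ∈ A x} := by
              gcongr; exact measure_biUnion_finset_le _ _
        _ ≤ (ENNReal.ofReal (Real.exp (-a * s t)) + ENNReal.ofReal (Real.exp (-a * s t)))
            + ∑ x ∈ τ, ENNReal.ofReal (Real.exp (-a * s t)) :=
              add_le_add (add_le_add h2 h3) (Finset.sum_le_sum fun x hx => h1 x hx)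
        _ = (n : ℝ≥0∞) * ENNReal.ofReal (Real.exp (-a * s t)) := by
              rw [Finset.sum_const, nsmul_eq_mul, hndef]
              push_cast
              ring
    -- conclude
    apply limsup_le_of_le
    · exact isCobounded_le_of_bot
    · have haL : 0 < a - L := by linarith
      filter_upwards [hev, hs.eventually_ge_atTop (Real.log n / (a - L))] with t h1 h2
      have hnpos : (0 : ℝ) < n := by linarith
      have hlog : ENNReal.log (μ {ω | R t ω ∈ C})
          ≤ ((Real.log n + (-a * s t) : ℝ) : EReal) := by
        have h3 := ENNReal.log_monotone h1
        have h4 : (n : ℝ≥0∞) * ENNReal.ofReal (Real.exp (-a * s t))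
            = ENNReal.ofReal ((n : ℝ) * Real.exp (-a * s t)) := by
          rw [ENNReal.ofReal_mul (by positivity)]
          congr 1
          rw [ENNReal.ofReal_natCast]
        rw [h4, ENNReal.log_ofReal_of_pos (by positivity)] at h3
        rwa [Real.log_mul (by positivity) (Real.exp_ne_zero _), Real.log_exp] at h3
      have hreal : (Real.log n + (-a * s t)) / s t ≤ -L := by
        rw [div_le_iff₀ (hspos t)]
        have h5 : Real.log n ≤ (a - L) * s t := by
          rw [div_le_iff₀ haL] at h2
          nlinarith [hspos t]
        nlinarith
      calc f t ≤ ((Real.log n + (-a * s t) : ℝ) : EReal) / (s t : EReal) := by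
            refine EReal.div_le_div_right_of_nonneg ?_ hlog
            exact_mod_cast (hspos t).le
        _ = (((Real.log n + (-a * s t)) / s t : ℝ) : EReal) := (EReal.coe_div _ _).symm
        _ ≤ ((-L : ℝ) : EReal) := by exact_mod_cast hreal
  -- from key and htriv to the conclusion
  by_contra hcon
  push_neg at hcon
  obtain ⟨r, hr1, hr2⟩ := EReal.exists_between_coe_real hcon
  have hrneg : r < 0 := by
    have : (r : EReal) < ((0 : ℝ) : EReal) := lt_of_lt_of_le hr2 (by exact_mod_cast htriv)
    exact_mod_cast this
  have hLJ : ((-r : ℝ) : EReal) < J := by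
    rw [EReal.coe_neg]
    rw [← EReal.neg_lt_neg_iff, neg_neg]
    exact hr1
  have := key (-r) (by linarith) hLJ
  rw [neg_neg] at this
  exact absurd hr2 (not_lt.2 this)
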